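/- Let G be the group with presentation ⟨x₁, x₂, μ | μ x₁ μ⁻¹ = x₁ x₂⁻¹, μ x₂⁻² x₁ μ⁻¹ = x₂⁻²⟩ (the Lin presentation of the 5₂ knot group) and let ζ₇ = exp(2π√−1/7). Then for each k ∈ {1, 2, 3} there exists a group homomorphism ρ_k: G → SL(2,ℂ) with ρ_k(x₁) = [[ζ₇^k,0],[0,ζ₇^{−k}]], ρ_k(x₂) = [[ζ₇^{2k},0],[0,ζ₇^{−2k}]], and ρ_k(μ) = J; each ρ_k is irreducible, and ρ₁, ρ₂, ρ₃ are pairwise non-conjugate in SL(2,ℂ). -/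

import Mathlib

open Matrix

abbrev SL2C := Matrix.SpecialLinearGroup (Fin 2) ℂ

/-- The relators of the Lin presentation
`⟨x₁, x₂, μ | μ x₁ μ⁻¹ = x₁ x₂⁻¹, μ x₂⁻² x₁ μ⁻¹ = x₂⁻²⟩` of the `5₂` knot group,
with `x₁, x₂, μ` the generators `0, 1, 2`. -/
def fiveTwoRels : Set (FreeGroup (Fin 3)) :=
  { (FreeGroup.of 2) * (FreeGroup.of 0) * (FreeGroup.of 2)⁻¹ *
      ((FreeGroup.of 0) * (FreeGroup.of 1)⁻¹)⁻¹,
    (FreeGroup.of 2) * ((FreeGroup.of 1) ^ (2 : ℕ))⁻¹ * (FreeGroup.of 0) *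
      (FreeGroup.of 2)⁻¹ * ((((FreeGroup.of 1) ^ (2 : ℕ))⁻¹)⁻¹) }

/-- The `5₂` knot group via its Lin presentation. -/
def FiveTwoGroup : Type := PresentedGroup fiveTwoRels

instance : Group FiveTwoGroup := by unfold FiveTwoGroup; infer_instance

noncomputable def sdiag (a : ℂ) (h : a ≠ 0) : SL2C :=
  ⟨!![a, 0; 0, a⁻¹], by simp [Matrix.det_fin_two_of, mul_inv_cancel₀ h]⟩

def Jmat : SL2C := ⟨!![0, 1; -1, 0], by norm_num [Matrix.det_fin_two_of]⟩

noncomputable def rhoFun (a : ℂ) (h : a ≠ 0) : Fin 3 → SL2C :=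
  ![sdiag a h, sdiag (a ^ 2) (pow_ne_zero 2 h), Jmat]

lemma rho_rels (a : ℂ) (h : a ≠ 0) (h7 : a ^ 7 = 1) :
    ∀ r ∈ fiveTwoRels, FreeGroup.lift (rhoFun a h) r = 1 := by
  intro r hr
  rcases hr with rfl | rfl <;>
  · simp only [_root_.map_mul, _root_.map_inv, _root_.map_pow, FreeGroup.lift_apply_of, rhoFun,
      Matrix.cons_val_zero, Matrix.cons_val_one, Matrix.head_cons, Matrix.cons_val_two,
      Matrix.tail_cons]
    apply Subtype.ext
    simp only [Matrix.SpecialLinearGroup.coe_mul, Matrix.SpecialLinearGroup.coe_inv,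
      Matrix.SpecialLinearGroup.coe_one, Matrix.SpecialLinearGroup.coe_pow]
    simp only [sdiag, Jmat, Matrix.adjugate_fin_two_of]
    ext i j
    fin_cases i <;> fin_cases j <;>
      simp [Matrix.mul_apply, Fin.sum_univ_two, Matrix.one_apply, pow_succ] <;>
        field_simp <;> first | linear_combination a * h7 | linear_combination (-a) * h7 | linear_combination (a + 1) * h7 | linear_combination (a - 1) * h7 | linear_combination h7 | linear_combination (-1 : ℂ) * h7

noncomputable def rho (a : ℂ) (h : a ≠ 0) (h7 : a ^ 7 = 1) : FiveTwoGroup →* SL2C :=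
  PresentedGroup.toGroup (rho_rels a h h7)

lemma rho_of (a : ℂ) (h : a ≠ 0) (h7 : a ^ 7 = 1) (i : Fin 3) :
    rho a h h7 (PresentedGroup.of i) = rhoFun a h i :=
  PresentedGroup.toGroup.of (rho_rels a h h7)

lemma irred_aux (a : ℂ) (ha : a ≠ 0) (h2 : a ^ 2 ≠ 1)
    (W : Submodule ℂ (Fin 2 → ℂ)) (hW : Module.finrank ℂ W = 1)
    (hA : ∀ w ∈ W, (!![a, 0; 0, a⁻¹] : Matrix (Fin 2) (Fin 2) ℂ).mulVec w ∈ W)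
    (hJ : ∀ w ∈ W, (!![0, 1; -1, 0] : Matrix (Fin 2) (Fin 2) ℂ).mulVec w ∈ W) : False := by
  obtain ⟨v, hv0, hv⟩ := (finrank_eq_one_iff' (K := ℂ) (V := W)).mp hW
  set u : Fin 2 → ℂ := (v : Fin 2 → ℂ) with hu
  have hu0 : u ≠ 0 := fun h => hv0 (Subtype.ext h)
  have huW : u ∈ W := v.2
  have hmul : ∀ w ∈ W, ∃ c : ℂ, w = c • u := by
    intro w hw
    obtain ⟨c, hc⟩ := hv ⟨w, hw⟩
    exact ⟨c, by simpa [hu] using congrArg (Subtype.val) hc.symm⟩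
  obtain ⟨c, hc⟩ := hmul _ (hA u huW)
  have h0 : a * u 0 = c * u 0 := by
    have := congrFun hc 0
    simpa [Matrix.mulVec, dotProduct, Fin.sum_univ_two, Matrix.vecHead, Matrix.vecTail] using this
  have h1 : a⁻¹ * u 1 = c * u 1 := by
    have := congrFun hc 1
    simpa [Matrix.mulVec, dotProduct, Fin.sum_univ_two, Matrix.vecHead, Matrix.vecTail] using this
  obtain ⟨d, hd⟩ := hmul _ (hJ u huW)
  have j0 : u 1 = d * u 0 := by
    have := congrFun hd 0
    simpa [Matrix.mulVec, dotProduct, Fin.sum_univ_two, Matrix.vecHead, Matrix.vecTail] using this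
  have j1 : -u 0 = d * u 1 := by
    have := congrFun hd 1
    simpa [Matrix.mulVec, dotProduct, Fin.sum_univ_two, Matrix.vecHead, Matrix.vecTail] using this
  by_cases hu00 : u 0 = 0
  · have hu1 : u 1 ≠ 0 := by
      intro h1'
      apply hu0; funext i; fin_cases i <;> simp [hu00, h1']
    rw [hu00, mul_zero] at j0
    exact hu1 j0
  · by_cases hu11 : u 1 = 0
    · rw [hu11, mul_zero] at j1
      exact hu00 (neg_eq_zero.mp j1)
    · have e0 : a = c := mul_right_cancel₀ hu00 h0
      have e1 : a⁻¹ = c := mul_right_cancel₀ hu11 h1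
      apply h2
      have heq : a = a⁻¹ := e0.trans e1.symm
      rw [sq]
      nth_rewrite 2 [heq]
      exact mul_inv_cancel₀ ha

lemma irred_rho (a : ℂ) (h : a ≠ 0) (h7 : a ^ 7 = 1) (h2 : a ^ 2 ≠ 1)
    (W : Submodule ℂ (Fin 2 → ℂ)) (hW : Module.finrank ℂ W = 1)
    (hall : ∀ g : FiveTwoGroup, ∀ w ∈ W,
      ((rho a h h7) g : Matrix (Fin 2) (Fin 2) ℂ).mulVec w ∈ W) : False := by
  refine irred_aux a h h2 W hW (fun w hw => ?_) (fun w hw => ?_)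
  · have := hall (PresentedGroup.of (0 : Fin 3)) w hw
    rw [rho_of] at this
    simpa [rhoFun, sdiag] using this
  · have := hall (PresentedGroup.of (2 : Fin 3)) w hw
    rw [rho_of] at this
    simpa [rhoFun, Jmat] using this

lemma trace_conj (P M : SL2C) :
    Matrix.trace ((P * M * P⁻¹ : SL2C) : Matrix (Fin 2) (Fin 2) ℂ) =
      Matrix.trace (M : Matrix (Fin 2) (Fin 2) ℂ) := by
  rw [Matrix.SpecialLinearGroup.coe_mul, Matrix.SpecialLinearGroup.coe_mul,
    Matrix.trace_mul_comm, ← Matrix.mul_assoc, ← Matrix.SpecialLinearGroup.coe_mul,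
    inv_mul_cancel, Matrix.SpecialLinearGroup.coe_one, Matrix.one_mul]

lemma trace_eq_of_conj {a b : ℂ} {ha : a ≠ 0} {hb : b ≠ 0} {h7a : a ^ 7 = 1} {h7b : b ^ 7 = 1}
    (P : SL2C) (h : ∀ g : FiveTwoGroup, rho b hb h7b g = P * rho a ha h7a g * P⁻¹) :
    b + b⁻¹ = a + a⁻¹ := by
  have := h (PresentedGroup.of (0 : Fin 3))
  rw [rho_of, rho_of] at this
  have ht := congrArg (fun m : SL2C => Matrix.trace (m : Matrix (Fin 2) (Fin 2) ℂ)) this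
  simp only [trace_conj] at ht
  simpa [rhoFun, sdiag, Matrix.trace_fin_two_of] using ht

lemma factor_ne (ζ : ℂ) (h : IsPrimitiveRoot ζ 7) (p q r : ℕ) (hq : 0 < q) (hr : 0 < r)
    (hq7 : q < 7) (hr7 : r < 7) (h0 : ζ ^ p * ((ζ ^ q - 1) * (ζ ^ r - 1)) = 0) : False := by
  have hz : ζ ≠ 0 := h.ne_zero (by norm_num)
  rcases mul_eq_zero.mp h0 with h1 | h1
  · exact pow_ne_zero p hz h1
  rcases mul_eq_zero.mp h1 with h2 | h2
  · exact h.pow_ne_one_of_pos_of_lt hq.ne' hq7 (sub_eq_zero.mp h2)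
  · exact h.pow_ne_one_of_pos_of_lt hr.ne' hr7 (sub_eq_zero.mp h2)

lemma ne21 (ζ : ℂ) (h : IsPrimitiveRoot ζ 7) : ζ ^ 2 + (ζ ^ 2)⁻¹ ≠ ζ ^ 1 + (ζ ^ 1)⁻¹ := by
  intro heq
  have hz : ζ ≠ 0 := h.ne_zero (by norm_num)
  field_simp at heq
  exact factor_ne ζ h 1 1 3 one_pos (by norm_num) (by norm_num) (by norm_num)
    (by linear_combination ζ * heq)

lemma ne31 (ζ : ℂ) (h : IsPrimitiveRoot ζ 7) : ζ ^ 3 + (ζ ^ 3)⁻¹ ≠ ζ ^ 1 + (ζ ^ 1)⁻¹ := by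
  intro heq
  have hz : ζ ≠ 0 := h.ne_zero (by norm_num)
  field_simp at heq
  exact factor_ne ζ h 1 2 4 two_pos (by norm_num) (by norm_num) (by norm_num)
    (by linear_combination ζ * heq)

lemma ne32 (ζ : ℂ) (h : IsPrimitiveRoot ζ 7) : ζ ^ 3 + (ζ ^ 3)⁻¹ ≠ ζ ^ 2 + (ζ ^ 2)⁻¹ := by
  intro heq
  have hz : ζ ≠ 0 := h.ne_zero (by norm_num)
  field_simp at heq
  exact factor_ne ζ h 2 1 5 one_pos (by norm_num) (by norm_num) (by norm_num)
    (by linear_combination ζ ^ 2 * heq)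

/-- with `ζ₇ = exp(2π√−1/7)`, for each `k ∈ {1,2,3}` there is a
homomorphism `ρₖ` from the Lin-presented `5₂` knot group to `SL(2,ℂ)` with
`ρₖ(x₁) = diag(ζ₇ᵏ, ζ₇⁻ᵏ)`, `ρₖ(x₂) = diag(ζ₇²ᵏ, ζ₇⁻²ᵏ)`, `ρₖ(μ) = [[0,1],[-1,0]]`;
each `ρₖ` is irreducible, and `ρ₁, ρ₂, ρ₃` are pairwise non-conjugate in `SL(2,ℂ)`. -/
theorem stmt15 (ζ : ℂ) (hζ : ζ = Complex.exp (2 * Real.pi * Complex.I / 7)) :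
    ∃ ρ₁ ρ₂ ρ₃ : FiveTwoGroup →* SL2C,
      (∀ k : Fin 3, ∀ ρ : FiveTwoGroup →* SL2C, ρ = [ρ₁, ρ₂, ρ₃].get k →
        ((ρ (PresentedGroup.of (0 : Fin 3)) : Matrix (Fin 2) (Fin 2) ℂ) =
          !![ζ ^ ((k : ℕ) + 1), 0; 0, (ζ ^ ((k : ℕ) + 1))⁻¹]) ∧
        ((ρ (PresentedGroup.of (1 : Fin 3)) : Matrix (Fin 2) (Fin 2) ℂ) =
          !![ζ ^ (2 * ((k : ℕ) + 1)), 0; 0, (ζ ^ (2 * ((k : ℕ) + 1)))⁻¹]) ∧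
        ((ρ (PresentedGroup.of (2 : Fin 3)) : Matrix (Fin 2) (Fin 2) ℂ) =
          !![0, 1; -1, 0]) ∧
        (∀ W : Submodule ℂ (Fin 2 → ℂ), Module.finrank ℂ W = 1 →
          ¬ ∀ g : FiveTwoGroup, ∀ w ∈ W,
              (ρ g : Matrix (Fin 2) (Fin 2) ℂ).mulVec w ∈ W)) ∧
      (¬ ∃ P : SL2C, ∀ g : FiveTwoGroup, ρ₂ g = P * ρ₁ g * P⁻¹) ∧
      (¬ ∃ P : SL2C, ∀ g : FiveTwoGroup, ρ₃ g = P * ρ₁ g * P⁻¹) ∧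
      (¬ ∃ P : SL2C, ∀ g : FiveTwoGroup, ρ₃ g = P * ρ₂ g * P⁻¹) := by
  have hprim : IsPrimitiveRoot ζ 7 := by
    rw [hζ]
    simpa using Complex.isPrimitiveRoot_exp 7 (by norm_num)
  have hz : ζ ≠ 0 := hprim.ne_zero (by norm_num)
  have h7 : ζ ^ 7 = 1 := hprim.pow_eq_one
  have ha : ∀ n : ℕ, ζ ^ n ≠ 0 := fun n => pow_ne_zero n hz
  have h7a : ∀ n : ℕ, (ζ ^ n) ^ 7 = 1 := by
    intro n
    rw [← pow_mul, mul_comm, pow_mul, h7, one_pow]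
  refine ⟨rho (ζ ^ 1) (ha 1) (h7a 1), rho (ζ ^ 2) (ha 2) (h7a 2),
    rho (ζ ^ 3) (ha 3) (h7a 3), ?_, ?_, ?_, ?_⟩
  · intro k ρ hρ
    fin_cases k <;> simp only [List.get] at hρ <;> subst hρ <;>
      refine ⟨?_, ?_, ?_, ?_⟩ <;>
      first
        | (intro W hW hall
           refine irred_rho _ _ _ ?_ W hW hall
           rw [← pow_mul]
           exact hprim.pow_ne_one_of_pos_of_lt (by norm_num) (by norm_num))
        | (rw [rho_of]; simp [rhoFun, sdiag, Jmat, ← pow_mul])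
  · rintro ⟨P, hP⟩
    exact ne21 ζ hprim (trace_eq_of_conj P hP)
  · rintro ⟨P, hP⟩
    exact ne31 ζ hprim (trace_eq_of_conj P hP)
  · rintro ⟨P, hP⟩
    exact ne32 ζ hprim (trace_eq_of_conj P hP)
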